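/- arXiv:2210.08136 — 3 statements merged into one kernel-verified Lean document; each statement's English description precedes it below -/
import Mathlib

section
/- Let Video be a type and call a finite list of videos a persona. Let O be an obfuscator, i.e., a function assigning to each persona P a probability mass function O(P) on personas. Assume (i) O never deletes videos: for every persona P and every persona Q in the support of O(P), every video occurring in P also occurs in Q; and (ii) O only injects videos from a fixed obfuscation set 𝒪 of videos: for every persona P and every persona Q in the support of O(P), every video occurring in Q either occurs in P or belongs to 𝒪. Let P₁ and P₂ be personas and v a video with v occurring in P₂, v not occurring in P₁, and v ∉ 𝒪. Then for the set A = {Q : v does not occur in Q} of personas, the probability that a sample of O(P₁) lies in A equals 1 and the probability that a sample of O(P₂) lies in A equals 0; consequently, for every real ε, Pr[O(P₁) ∈ A] > exp(ε) · Pr[O(P₂) ∈ A], so O does not satisfy ε-differential privacy for any ε. -/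
/-- An obfuscator that never deletes videos and only injects
videos from a fixed obfuscation set cannot satisfy ε-differential privacy
for any ε. -/
theorem obfuscator_not_eps_DP {Video : Type*}
    (O : List Video → PMF (List Video)) (𝒪 : Set Video)
    (hNoDelete : ∀ P Q, Q ∈ (O P).support → ∀ w : Video, w ∈ P → w ∈ Q)
    (hInject : ∀ P Q, Q ∈ (O P).support → ∀ w : Video, w ∈ Q → w ∈ P ∨ w ∈ 𝒪)
    (P₁ P₂ : List Video) (v : Video)
    (hv₂ : v ∈ P₂) (hv₁ : v ∉ P₁) (hv𝒪 : v ∉ 𝒪) :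
    (O P₁).toOuterMeasure {Q : List Video | v ∉ Q} = 1 ∧
    (O P₂).toOuterMeasure {Q : List Video | v ∉ Q} = 0 ∧
    ∀ ε : ℝ,
      ENNReal.ofReal (Real.exp ε) * (O P₂).toOuterMeasure {Q : List Video | v ∉ Q}
        < (O P₁).toOuterMeasure {Q : List Video | v ∉ Q} := by
  have h1 : (O P₁).toOuterMeasure {Q : List Video | v ∉ Q} = 1 := by
    rw [PMF.toOuterMeasure_apply_eq_one_iff]
    exact fun Q hQ hv => (hInject P₁ Q hQ v hv).elim hv₁ hv𝒪
  have h2 : (O P₂).toOuterMeasure {Q : List Video | v ∉ Q} = 0 := by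
    rw [PMF.toOuterMeasure_apply_eq_zero_iff]
    rw [Set.disjoint_right]
    intro Q hQA hQ
    exact hQA (hNoDelete P₂ Q hQ v hv₂)
  refine ⟨h1, h2, fun ε => ?_⟩
  rw [h1, h2, mul_zero]
  exact zero_lt_one
end

section
/- Let Video be a type and call a finite list of videos a persona. Let O be an obfuscator, i.e., a function assigning to each persona P a probability mass function O(P) on personas. Assume (i) O never deletes videos: for every persona P and every persona Q in the support of O(P), every video occurring in P also occurs in Q; and (ii) O only injects videos from a fixed obfuscation set 𝒪 of videos: for every persona P and every persona Q in the support of O(P), every video occurring in Q either occurs in P or belongs to 𝒪. Let P₁ and P₂ be personas and v a video with v occurring in P₂, v not occurring in P₁, and v ∉ 𝒪. Then for every real ε ≥ 0, any δ ≥ 0 such that for all sets A of personas Pr[O(P₁) ∈ A] ≤ exp(ε) · Pr[O(P₂) ∈ A] + δ must satisfy δ ≥ 1; in particular, O does not satisfy (ε,δ)-differential privacy for any ε ≥ 0 and any δ < 1. -/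
/-- An obfuscator that never deletes videos and only injects
videos from a fixed obfuscation set cannot satisfy (ε,δ)-differential privacy
for any ε ≥ 0 and δ < 1: any valid δ ≥ 0 must satisfy δ ≥ 1. -/
theorem obfuscator_not_eps_delta_DP {Video : Type*}
    (O : List Video → PMF (List Video)) (𝒪 : Set Video)
    (hNoDelete : ∀ P Q, Q ∈ (O P).support → ∀ w : Video, w ∈ P → w ∈ Q)
    (hInject : ∀ P Q, Q ∈ (O P).support → ∀ w : Video, w ∈ Q → w ∈ P ∨ w ∈ 𝒪)
    (P₁ P₂ : List Video) (v : Video)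
    (hv₂ : v ∈ P₂) (hv₁ : v ∉ P₁) (hv𝒪 : v ∉ 𝒪) :
    ∀ ε δ : ℝ, 0 ≤ ε → 0 ≤ δ →
      (∀ A : Set (List Video),
        (O P₁).toOuterMeasure A ≤
          ENNReal.ofReal (Real.exp ε) * (O P₂).toOuterMeasure A
            + ENNReal.ofReal δ) →
      1 ≤ δ := by
  intro ε δ hε hδ hDP
  set A : Set (List Video) := {Q | v ∉ Q} with hA
  have h1 : (O P₁).toOuterMeasure A = 1 := by
    rw [PMF.toOuterMeasure_apply_eq_one_iff]
    intro Q hQ hvQ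
    rcases hInject P₁ Q hQ v hvQ with h | h
    · exact hv₁ h
    · exact hv𝒪 h
  have h2 : (O P₂).toOuterMeasure A = 0 := by
    rw [PMF.toOuterMeasure_apply_eq_zero_iff]
    rw [Set.disjoint_left]
    intro Q hQ hQA
    exact hQA (hNoDelete P₂ Q hQ v hv₂)
  have := hDP A
  rw [h1, h2, mul_zero, zero_add] at this
  have : (1 : ℝ) ≤ δ := by
    have := (ENNReal.one_le_ofReal).mp this
    exact this
  exact this
end

section
/- Let Video and Category be types, call a finite list of videos a persona, and call a finite set of categories a user profile. Let O be an obfuscator, i.e., a function assigning to each persona P a probability mass function O(P) on personas, and let R be a function mapping each persona to a user profile. Let P₁ and P₂ be personas and I a category such that: for every persona Q in the support of O(P₂), I ∈ R(Q), and for every persona Q in the support of O(P₁), I ∉ R(Q). Then for every real ε ≥ 0, any δ ≥ 0 such that for all sets 𝒜 of user profiles Pr[R(O(P₁)) ∈ 𝒜] ≤ exp(ε) · Pr[R(O(P₂)) ∈ 𝒜] + δ must satisfy δ ≥ 1; in particular, the composed mechanism P ↦ R(O(P)) does not satisfy (ε,δ)-differential privacy for any ε ≥ 0 and any δ < 1.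 -/
/-- If every persona in the support of O(P₂) is mapped by the
user-profile map R to a profile containing interest category I, while no
persona in the support of O(P₁) is, then the composed mechanism R ∘ O cannot
satisfy (ε,δ)-differential privacy for any ε ≥ 0 and δ < 1: any valid δ ≥ 0
must satisfy δ ≥ 1. -/
theorem composed_mechanism_not_eps_delta_DP {Video Category : Type*}
    (O : List Video → PMF (List Video))
    (R : List Video → Finset Category)
    (P₁ P₂ : List Video) (I : Category)
    (h₂ : ∀ Q, Q ∈ (O P₂).support → I ∈ R Q)
    (h₁ : ∀ Q, Q ∈ (O P₁).support → I ∉ R Q) :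
    ∀ ε δ : ℝ, 0 ≤ ε → 0 ≤ δ →
      (∀ 𝒜 : Set (Finset Category),
        (O P₁).toOuterMeasure {Q : List Video | R Q ∈ 𝒜} ≤
          ENNReal.ofReal (Real.exp ε) *
              (O P₂).toOuterMeasure {Q : List Video | R Q ∈ 𝒜}
            + ENNReal.ofReal δ) →
      1 ≤ δ := by
  intro ε δ hε hδ h
  have key := h {S | I ∉ S}
  have h1 : (O P₁).toOuterMeasure {Q : List Video | R Q ∈ {S : Finset Category | I ∉ S}} = 1 := by
    rw [PMF.toOuterMeasure_apply_eq_one_iff]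
    intro Q hQ
    exact h₁ Q hQ
  have h2 : (O P₂).toOuterMeasure {Q : List Video | R Q ∈ {S : Finset Category | I ∉ S}} = 0 := by
    rw [PMF.toOuterMeasure_apply_eq_zero_iff]
    rw [Set.disjoint_left]
    intro Q hQ hQ'
    exact hQ' (h₂ Q hQ)
  rw [h1, h2, mul_zero, zero_add] at key
  have := (ENNReal.one_le_ofReal).mp key
  linarith
end
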